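/- The momentum-energy map R is quadrirational, with the explicit companion inversions: let x, y ∈ ℝ² with ⟨x+y, x+y⟩ ≠ 0 and ⟨x,x⟩ ≠ ⟨y,y⟩, and let u = y + k(x,y)(x+y), v = x − k(x,y)(x+y) where k(x,y) = (⟨x,x⟩ − ⟨y,y⟩)/⟨x+y, x+y⟩. Then ⟨x−v, x−v⟩ ≠ 0 and ⟨u−y, u−y⟩ ≠ 0, and one has u = −v + k(x, −v)(x − v), y = −x + k(x, −v)(x − v), as well as v = −u + k(u, −y)(u − y), x = −y + k(u, −y)(u − y). In particular, for fixed y the map x ↦ u and for fixed x the map y ↦ v are birational. -/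
import Mathlib


/-- The two-dimensional Minkowski bilinear form on `ℝ²`. -/
def mink (a b : ℝ × ℝ) : ℝ := a.1 * b.1 - a.2 * b.2

/-- The coefficient `k(x,y)` of the relativistic head-on collision map. -/
noncomputable def kcol (x y : ℝ × ℝ) : ℝ :=
  (mink x x - mink y y) / mink (x + y) (x + y)

/-- The momentum-energy map is quadrirational: the explicit companion
inversions recover `(u, y)` from `(x, v)` and `(v, x)` from `(u, y)`. -/
theorem momentum_energy_quadrirational
    (x y : ℝ × ℝ)
    (h : mink (x + y) (x + y) ≠ 0)
    (hm : mink x x ≠ mink y y)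
    (u v : ℝ × ℝ)
    (hu : u = y + kcol x y • (x + y))
    (hv : v = x - kcol x y • (x + y)) :
    mink (x - v) (x - v) ≠ 0 ∧
    mink (u - y) (u - y) ≠ 0 ∧
    u = -v + kcol x (-v) • (x - v) ∧
    y = -x + kcol x (-v) • (x - v) ∧
    v = -u + kcol u (-y) • (u - y) ∧
    x = -y + kcol u (-y) • (u - y) := by
  set k := kcol x y with hkdef
  have hk : k ≠ 0 := div_ne_zero (sub_ne_zero.mpr hm) h
  have hks : k * mink (x + y) (x + y) = mink x x - mink y y := div_mul_cancel₀ _ h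
  have hxv : x - v = k • (x + y) := by rw [hv]; abel
  have huy : u - y = k • (x + y) := by rw [hu]; abel
  have hsm : mink (k • (x + y)) (k • (x + y)) = k ^ 2 * mink (x + y) (x + y) := by
    simp only [mink, Prod.smul_fst, Prod.smul_snd, smul_eq_mul]; ring
  have h1 : mink (x - v) (x - v) ≠ 0 := by
    rw [hxv, hsm]; exact mul_ne_zero (pow_ne_zero 2 hk) h
  have h2 : mink (u - y) (u - y) ≠ 0 := by
    rw [huy, hsm]; exact mul_ne_zero (pow_ne_zero 2 hk) h
  have hnum1 : mink x x - mink (-v) (-v) = k * mink (x + y) (x + y) := by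
    rw [hv]
    simp only [mink, Prod.fst_add, Prod.snd_add, Prod.fst_neg, Prod.snd_neg,
      Prod.fst_sub, Prod.snd_sub, Prod.smul_fst, Prod.smul_snd, smul_eq_mul] at hks ⊢
    linear_combination (-k) * hks
  have hnum2 : mink u u - mink (-y) (-y) = k * mink (x + y) (x + y) := by
    rw [hu]
    simp only [mink, Prod.fst_add, Prod.snd_add, Prod.fst_neg, Prod.snd_neg,
      Prod.smul_fst, Prod.smul_snd, smul_eq_mul] at hks ⊢
    linear_combination k * hks
  have hadd1 : x + -v = x - v := by abel
  have hadd2 : u + -y = u - y := by abel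
  have hk1 : kcol x (-v) = k⁻¹ := by
    rw [kcol, hadd1, hxv, hsm, hnum1]
    rw [pow_two, mul_assoc, mul_div_mul_left _ _ hk, mul_comm, ← div_div, div_self h, one_div]
  have hk2 : kcol u (-y) = k⁻¹ := by
    rw [kcol, hadd2, huy, hsm, hnum2]
    rw [pow_two, mul_assoc, mul_div_mul_left _ _ hk, mul_comm, ← div_div, div_self h, one_div]
  refine ⟨h1, h2, ?_, ?_, ?_, ?_⟩
  · rw [hk1, hxv, smul_smul, inv_mul_cancel₀ hk, one_smul, hu, hv]; abel
  · rw [hk1, hxv, smul_smul, inv_mul_cancel₀ hk, one_smul]; abel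
  · rw [hk2, huy, smul_smul, inv_mul_cancel₀ hk, one_smul, hu, hv]; abel
  · rw [hk2, huy, smul_smul, inv_mul_cancel₀ hk, one_smul]; abel
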